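/- arXiv:2602.20086 — 3 statements merged into one kernel-verified Lean document; each statement's English description precedes it below -/
import Mathlib

section
/- Let N ≥ 1 and let h, g range over integers with h, g > N^{2/3}. The number of quadruples (n₁, n₂, n₃, n₄) of positive integers with all nᵢ ≤ N, satisfying n₁n₂ = n₃n₄ and P⁺(n₁) = P⁺(n₂) = P⁺(n₃) = P⁺(n₄) = p for some common prime p > N^{2/3}, is ≪ N^{4/3} log N. -/
open Finset

/-- The largest prime factor of `n` (0 if `n` has no prime factor). -/
def maxPrimeFac (n : ℕ) : ℕ := n.primeFactors.sup id

def quadFS (M : ℕ) : Finset (ℕ × ℕ × ℕ × ℕ) :=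
  ((Icc 1 M) ×ˢ (Icc 1 M) ×ˢ (Icc 1 M) ×ˢ (Icc 1 M)).filter
    (fun m => m.1 * m.2.1 = m.2.2.1 * m.2.2.2)

def TFS (M : ℕ) : Finset (ℕ × ℕ × ℕ × ℕ) :=
  ((Icc 1 M) ×ˢ (Icc 1 M) ×ˢ (Icc 1 M) ×ˢ (Icc 1 M)).filter
    (fun t => t.1 * t.2.2.1 ≤ M ∧ t.1 * t.2.2.2 ≤ M ∧
      t.2.1 * t.2.2.1 ≤ M ∧ t.2.1 * t.2.2.2 ≤ M)

lemma quad_le_T (M : ℕ) : (quadFS M).card ≤ (TFS M).card := by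
  classical
  set ψ : ℕ × ℕ × ℕ × ℕ → ℕ × ℕ × ℕ × ℕ := fun m =>
    (Nat.gcd m.1 m.2.2.1, m.2.1 / (m.2.2.1 / Nat.gcd m.1 m.2.2.1),
      m.1 / Nat.gcd m.1 m.2.2.1, m.2.2.1 / Nat.gcd m.1 m.2.2.1) with hψ
  have key : ∀ m ∈ quadFS M, ψ m ∈ TFS M ∧
      ((ψ m).1 * (ψ m).2.2.1, (ψ m).2.1 * (ψ m).2.2.2,
        (ψ m).1 * (ψ m).2.2.2, (ψ m).2.1 * (ψ m).2.2.1) = m := by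
    rintro ⟨x, y, z, w⟩ hm
    simp only [quadFS, mem_filter, mem_product, mem_Icc] at hm
    obtain ⟨⟨⟨hx1, hxM⟩, ⟨hy1, hyM⟩, ⟨hz1, hzM⟩, ⟨hw1, hwM⟩⟩, heq⟩ := hm
    set a := Nat.gcd x z with ha
    have hapos : 0 < a := Nat.gcd_pos_of_pos_left _ hx1
    set c := x / a with hc
    set d := z / a with hd
    have hac : a * c = x := Nat.mul_div_cancel' (Nat.gcd_dvd_left x z)
    have had : a * d = z := Nat.mul_div_cancel' (Nat.gcd_dvd_right x z)
    have hcpos : 0 < c := Nat.pos_of_ne_zero (by intro h0; rw [h0, mul_zero] at hac; omega)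
    have hdpos : 0 < d := Nat.pos_of_ne_zero (by intro h0; rw [h0, mul_zero] at had; omega)
    have cop : Nat.Coprime c d := Nat.coprime_div_gcd_div_gcd hapos
    have hcy : c * y = d * w := by
      have h2 : a * (c * y) = a * (d * w) := by
        rw [← mul_assoc, ← mul_assoc, hac, had]; exact heq
      exact Nat.eq_of_mul_eq_mul_left hapos h2
    have hdy : d ∣ y := by
      have h3 : d ∣ c * y := ⟨w, hcy⟩
      exact (Nat.Coprime.dvd_of_dvd_mul_left cop.symm h3)
    set b := y / d with hb
    have hdb : d * b = y := Nat.mul_div_cancel' hdy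
    have hbc : b * c = w := by
      have h4 : d * (b * c) = d * w := by
        rw [← hcy, ← hdb]; ring
      exact Nat.eq_of_mul_eq_mul_left hdpos h4
    have hbpos : 0 < b := Nat.pos_of_ne_zero (by intro h0; rw [h0, mul_zero] at hdb; omega)
    have hψm : ψ (x, y, z, w) = (a, b, c, d) := by
      simp only [hψ, ← ha, ← hc, ← hd, ← hb]
    rw [hψm]
    constructor
    · simp only [TFS, mem_filter, mem_product, mem_Icc]
      refine ⟨⟨⟨hapos, ?_⟩, ⟨hbpos, ?_⟩, ⟨hcpos, ?_⟩, ⟨hdpos, ?_⟩⟩, ?_, ?_, ?_, ?_⟩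
      · calc a ≤ a * c := Nat.le_mul_of_pos_right a hcpos
          _ = x := hac
          _ ≤ M := hxM
      · calc b ≤ b * c := Nat.le_mul_of_pos_right b hcpos
          _ = w := hbc
          _ ≤ M := hwM
      · calc c ≤ a * c := Nat.le_mul_of_pos_left c hapos
          _ = x := hac
          _ ≤ M := hxM
      · calc d ≤ a * d := Nat.le_mul_of_pos_left d hapos
          _ = z := had
          _ ≤ M := hzM
      · rw [hac]; exact hxM
      · rw [had]; exact hzM
      · rw [hbc]; exact hwM
      · rw [mul_comm, hdb]; exact hyM
    · simp only [Prod.mk.injEq]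
      exact ⟨hac, by rw [mul_comm]; exact hdb, had, hbc⟩
  apply Finset.card_le_card_of_injOn ψ (fun m hm => (key m hm).1)
  intro m hm m' hm' h
  have h1 := (key m hm).2
  have h2 := (key m' hm').2
  rw [← h1, ← h2, h]

lemma T_card (M : ℕ) : (TFS M).card ≤ 2 * ∑ e ∈ Icc 1 M, (M / e) * ((M / e) * e) := by
  classical
  set F1 := (TFS M).filter (fun t => t.2.2.1 ≤ t.2.2.2) with hF1
  set F2 := (TFS M).filter (fun t => ¬ t.2.2.1 ≤ t.2.2.2) with hF2
  have hsplit : F1.card + F2.card = (TFS M).card :=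
    Finset.card_filter_add_card_filter_not _
  have hswap : F2.card ≤ F1.card := by
    apply Finset.card_le_card_of_injOn (fun t => (t.1, t.2.1, t.2.2.2, t.2.2.1))
    · rintro ⟨a, b, c, d⟩ ht
      change _ ∈ F2 at ht
      simp only [Finset.mem_coe, hF2, hF1, TFS, mem_filter, mem_product, mem_Icc] at ht ⊢
      obtain ⟨⟨⟨ha, hb, hc, hd⟩, h1, h2, h3, h4⟩, h5⟩ := ht
      exact ⟨⟨⟨ha, hb, hd, hc⟩, h2, h1, h4, h3⟩, by omega⟩
    · rintro ⟨a, b, c, d⟩ _ ⟨a', b', c', d'⟩ _ h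
      simp only [Prod.ext_iff, and_assoc] at h ⊢; tauto
  have hF1card : F1.card ≤ ∑ e ∈ Icc 1 M, (M / e) * ((M / e) * e) := by
    have hsub : F1 ⊆ (Icc 1 M).biUnion (fun e =>
        (Icc 1 (M / e)) ×ˢ (Icc 1 (M / e)) ×ˢ (Icc 1 e) ×ˢ ({e} : Finset ℕ)) := by
      rintro ⟨a, b, c, d⟩ ht
      simp only [hF1, TFS, mem_filter, mem_product, mem_Icc] at ht
      obtain ⟨⟨⟨⟨ha1, haM⟩, ⟨hb1, hbM⟩, ⟨hc1, hcM⟩, ⟨hd1, hdM⟩⟩, h1, h2, h3, h4⟩, h5⟩ := ht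
      simp only [mem_biUnion, mem_product, mem_Icc, mem_singleton]
      refine ⟨d, ⟨hd1, hdM⟩, ⟨ha1, ?_⟩, ⟨hb1, ?_⟩, ⟨hc1, h5⟩, rfl⟩
      · exact (Nat.le_div_iff_mul_le hd1).2 h2
      · exact (Nat.le_div_iff_mul_le hd1).2 h4
    calc F1.card ≤ _ := Finset.card_le_card hsub
      _ ≤ ∑ e ∈ Icc 1 M, ((Icc 1 (M / e)) ×ˢ (Icc 1 (M / e)) ×ˢ (Icc 1 e) ×ˢ ({e} : Finset ℕ)).card :=
        Finset.card_biUnion_le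
      _ = ∑ e ∈ Icc 1 M, (M / e) * ((M / e) * e) := by
        apply Finset.sum_congr rfl
        intro e _
        simp [Nat.card_Icc]
  omega

lemma quad_real (M : ℕ) : ((quadFS M).card : ℝ) ≤ 2 * (M : ℝ)^2 * (1 + Real.log M) := by
  have h3 : ((quadFS M).card : ℝ) ≤ 2 * ∑ e ∈ Icc 1 M, (((M / e : ℕ) : ℝ) * (((M / e : ℕ) : ℝ) * e)) := by
    have := (quad_le_T M).trans (T_card M)
    calc ((quadFS M).card : ℝ) ≤ ((2 * ∑ e ∈ Icc 1 M, (M / e) * ((M / e) * e) : ℕ) : ℝ) := by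
          exact_mod_cast this
      _ = _ := by push_cast [Finset.mul_sum]; exact Finset.sum_congr rfl (fun e _ => by ring)
  have h4 : ∑ e ∈ Icc 1 M, (((M / e : ℕ) : ℝ) * (((M / e : ℕ) : ℝ) * e))
      ≤ ∑ e ∈ Icc 1 M, (M : ℝ)^2 * (e : ℝ)⁻¹ := by
    apply Finset.sum_le_sum
    intro e he
    simp only [mem_Icc] at he
    have hepos : (0 : ℝ) < e := by exact_mod_cast he.1
    have hq : ((M / e : ℕ) : ℝ) ≤ (M : ℝ) / e := Nat.cast_div_le
    have hq0 : (0 : ℝ) ≤ ((M / e : ℕ) : ℝ) := Nat.cast_nonneg _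
    calc ((M / e : ℕ) : ℝ) * (((M / e : ℕ) : ℝ) * e)
        ≤ ((M : ℝ) / e) * (((M : ℝ) / e) * e) := by
          apply mul_le_mul hq _ (by positivity) (by positivity)
          exact mul_le_mul_of_nonneg_right hq hepos.le
      _ = (M : ℝ)^2 * (e : ℝ)⁻¹ := by field_simp
  have h5 : ∑ e ∈ Icc 1 M, (M : ℝ)^2 * (e : ℝ)⁻¹ = (M : ℝ)^2 * ((harmonic M : ℚ) : ℝ) := by
    rw [← Finset.mul_sum, harmonic_eq_sum_Icc]
    push_cast
    ring
  have h6 : ((harmonic M : ℚ) : ℝ) ≤ 1 + Real.log M := harmonic_le_one_add_log M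
  calc ((quadFS M).card : ℝ) ≤ _ := h3
    _ ≤ 2 * ((M : ℝ)^2 * ((harmonic M : ℚ) : ℝ)) := by rw [← h5]; linarith
    _ ≤ 2 * (M : ℝ)^2 * (1 + Real.log M) := by
        rw [mul_assoc]
        apply mul_le_mul_of_nonneg_left _ (by norm_num)
        apply mul_le_mul_of_nonneg_left h6 (by positivity)

lemma maxPrimeFac_dvd {n p : ℕ} (hp : p.Prime) (h : maxPrimeFac n = p) : p ∣ n := by
  have hne : n.primeFactors.Nonempty := by
    by_contra hemp
    rw [Finset.not_nonempty_iff_eq_empty] at hemp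
    rw [maxPrimeFac, hemp] at h
    simp at h
    exact hp.ne_zero h.symm
  obtain ⟨q, hq, hsup⟩ := Finset.exists_mem_eq_sup _ hne id
  rw [maxPrimeFac, hsup] at h
  simp only [id_eq] at h
  exact h ▸ Nat.dvd_of_mem_primeFactors hq

noncomputable def PFS (N : ℕ) : Finset ℕ :=
  @Finset.filter ℕ (fun p => p.Prime ∧ (N : ℝ) ^ ((2 : ℝ) / 3) < (p : ℝ))
    (Classical.decPred _) (Icc 1 N)

noncomputable def SFS (N : ℕ) : Finset (ℕ × ℕ × ℕ × ℕ) :=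
  @Finset.filter _ (fun q =>
      q.1 * q.2.1 = q.2.2.1 * q.2.2.2 ∧
      ∃ p : ℕ, p.Prime ∧ (N : ℝ) ^ ((2 : ℝ) / 3) < (p : ℝ) ∧
        maxPrimeFac q.1 = p ∧ maxPrimeFac q.2.1 = p ∧
        maxPrimeFac q.2.2.1 = p ∧ maxPrimeFac q.2.2.2 = p)
    (Classical.decPred _)
    ((Icc 1 N) ×ˢ (Icc 1 N) ×ˢ (Icc 1 N) ×ˢ (Icc 1 N))

lemma SFS_card_le (N : ℕ) : (SFS N).card ≤ ∑ p ∈ PFS N, (quadFS (N / p)).card := by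
  classical
  rw [← Finset.card_sigma]
  set f : ℕ × ℕ × ℕ × ℕ → Σ _ : ℕ, ℕ × ℕ × ℕ × ℕ := fun q =>
    ⟨maxPrimeFac q.1, (q.1 / maxPrimeFac q.1, q.2.1 / maxPrimeFac q.1,
      q.2.2.1 / maxPrimeFac q.1, q.2.2.2 / maxPrimeFac q.1)⟩ with hf
  have hdvd : ∀ q ∈ SFS N, (maxPrimeFac q.1).Prime ∧
      maxPrimeFac q.1 ∣ q.1 ∧ maxPrimeFac q.1 ∣ q.2.1 ∧
      maxPrimeFac q.1 ∣ q.2.2.1 ∧ maxPrimeFac q.1 ∣ q.2.2.2 := by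
    rintro ⟨n₁, n₂, n₃, n₄⟩ hq
    simp only [SFS, Finset.mem_filter] at hq
    obtain ⟨_, _, p, hp, _, h1, h2, h3, h4⟩ := hq
    rw [h1]
    exact ⟨hp, maxPrimeFac_dvd hp h1, maxPrimeFac_dvd hp h2,
      maxPrimeFac_dvd hp h3, maxPrimeFac_dvd hp h4⟩
  apply Finset.card_le_card_of_injOn f
  · rintro ⟨n₁, n₂, n₃, n₄⟩ hq
    obtain ⟨hp, d1, d2, d3, d4⟩ := hdvd _ hq
    change _ ∈ SFS N at hq
    simp only [SFS, Finset.mem_filter, Finset.mem_product, Finset.mem_Icc] at hq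
    obtain ⟨⟨⟨h11, h12⟩, ⟨h21, h22⟩, ⟨h31, h32⟩, ⟨h41, h42⟩⟩, heq, p, hpp, hplt, e1, e2, e3, e4⟩ := hq
    simp only [Finset.mem_coe, hf, Finset.mem_sigma]
    set P := maxPrimeFac n₁ with hP
    have hPpos : 0 < P := hp.pos
    constructor
    · simp only [PFS, Finset.mem_filter, Finset.mem_Icc]
      refine ⟨⟨hPpos, Nat.le_trans (Nat.le_of_dvd h11 d1) h12⟩, hp, ?_⟩
      rw [e1]; exact hplt
    · simp only [quadFS, mem_filter, mem_product, mem_Icc]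
      have div_le : ∀ n : ℕ, n ≤ N → n / P ≤ N / P := fun n h => Nat.div_le_div_right h
      have div_pos : ∀ n : ℕ, P ∣ n → 1 ≤ n → 1 ≤ n / P := by
        intro n hd h1
        exact Nat.one_le_div_iff hPpos |>.2 (Nat.le_of_dvd h1 hd)
      refine ⟨⟨⟨div_pos _ d1 h11, div_le _ h12⟩, ⟨div_pos _ d2 h21, div_le _ h22⟩,
        ⟨div_pos _ d3 h31, div_le _ h32⟩, ⟨div_pos _ d4 h41, div_le _ h42⟩⟩, ?_⟩
      have c1 : P * (n₁ / P) = n₁ := Nat.mul_div_cancel' d1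
      have c2 : P * (n₂ / P) = n₂ := Nat.mul_div_cancel' d2
      have c3 : P * (n₃ / P) = n₃ := Nat.mul_div_cancel' d3
      have c4 : P * (n₄ / P) = n₄ := Nat.mul_div_cancel' d4
      have hmm : P * P * ((n₁ / P) * (n₂ / P)) = P * P * ((n₃ / P) * (n₄ / P)) := by
        calc P * P * ((n₁ / P) * (n₂ / P)) = (P * (n₁ / P)) * (P * (n₂ / P)) := by ring
          _ = n₁ * n₂ := by rw [c1, c2]
          _ = n₃ * n₄ := heq
          _ = (P * (n₃ / P)) * (P * (n₄ / P)) := by rw [c3, c4]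
          _ = P * P * ((n₃ / P) * (n₄ / P)) := by ring
      exact Nat.eq_of_mul_eq_mul_left (by positivity) hmm
  · intro q hq q' hq' h
    obtain ⟨hp, d1, d2, d3, d4⟩ := hdvd _ hq
    obtain ⟨hp', d1', d2', d3', d4'⟩ := hdvd _ hq'
    simp only [hf, Sigma.mk.inj_iff] at h
    obtain ⟨hPeq, hrest⟩ := h
    have hrest' := eq_of_heq hrest
    simp only [Prod.mk.injEq] at hrest'
    obtain ⟨r1, r2, r3, r4⟩ := hrest'
    have e1 : q.1 = q'.1 := by
      rw [← Nat.mul_div_cancel' d1, ← Nat.mul_div_cancel' d1', r1, hPeq]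
    have e2 : q.2.1 = q'.2.1 := by
      rw [← Nat.mul_div_cancel' d2, ← Nat.mul_div_cancel' d2', r2, hPeq]
    have e3 : q.2.2.1 = q'.2.2.1 := by
      rw [← Nat.mul_div_cancel' d3, ← Nat.mul_div_cancel' d3', r3, hPeq]
    have e4 : q.2.2.2 = q'.2.2.2 := by
      rw [← Nat.mul_div_cancel' d4, ← Nat.mul_div_cancel' d4', r4, hPeq]
    exact Prod.ext e1 (Prod.ext e2 (Prod.ext e3 e4))

/-- The number of quadruples `(n₁, n₂, n₃, n₄)` of positive integers `≤ N` with
`n₁n₂ = n₃n₄` and common largest prime factor `p > N^{2/3}` is `≪ N^{4/3} log N`. -/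
theorem stmt_10 :
    ∃ C : ℝ, 0 < C ∧ ∃ N₀ : ℕ, ∀ N : ℕ, N₀ ≤ N →
      ((Set.ncard {q : ℕ × ℕ × ℕ × ℕ |
          (1 ≤ q.1 ∧ q.1 ≤ N) ∧ (1 ≤ q.2.1 ∧ q.2.1 ≤ N) ∧
          (1 ≤ q.2.2.1 ∧ q.2.2.1 ≤ N) ∧ (1 ≤ q.2.2.2 ∧ q.2.2.2 ≤ N) ∧
          q.1 * q.2.1 = q.2.2.1 * q.2.2.2 ∧
          ∃ p : ℕ, p.Prime ∧ (N : ℝ) ^ ((2 : ℝ) / 3) < (p : ℝ) ∧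
            maxPrimeFac q.1 = p ∧ maxPrimeFac q.2.1 = p ∧
            maxPrimeFac q.2.2.1 = p ∧ maxPrimeFac q.2.2.2 = p} : ℝ))
        ≤ C * (N : ℝ) ^ ((4 : ℝ) / 3) * Real.log N := by
  classical
  refine ⟨8, by norm_num, 3, fun N hN => ?_⟩
  have hN1 : (1 : ℕ) ≤ N := le_trans (by norm_num) hN
  have hN0 : (0 : ℝ) < N := by exact_mod_cast Nat.lt_of_lt_of_le (by norm_num) hN
  -- the set is the finset SFS N
  have hset : {q : ℕ × ℕ × ℕ × ℕ |
          (1 ≤ q.1 ∧ q.1 ≤ N) ∧ (1 ≤ q.2.1 ∧ q.2.1 ≤ N) ∧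
          (1 ≤ q.2.2.1 ∧ q.2.2.1 ≤ N) ∧ (1 ≤ q.2.2.2 ∧ q.2.2.2 ≤ N) ∧
          q.1 * q.2.1 = q.2.2.1 * q.2.2.2 ∧
          ∃ p : ℕ, p.Prime ∧ (N : ℝ) ^ ((2 : ℝ) / 3) < (p : ℝ) ∧
            maxPrimeFac q.1 = p ∧ maxPrimeFac q.2.1 = p ∧
            maxPrimeFac q.2.2.1 = p ∧ maxPrimeFac q.2.2.2 = p} = ↑(SFS N) := by
    ext q
    simp only [SFS, Set.mem_setOf_eq, Finset.coe_filter, Finset.mem_product, Finset.mem_Icc,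
      Set.mem_setOf_eq]
    tauto
  rw [hset, Set.ncard_coe_finset]
  -- notation
  set x : ℝ := (N : ℝ) ^ ((2 : ℝ) / 3) with hx
  have hx2 : (2 : ℝ) ≤ x := by
    have : ((3 : ℕ) : ℝ) ^ ((2 : ℝ) / 3) ≤ x := by
      apply Real.rpow_le_rpow (by norm_num) (by exact_mod_cast hN) (by norm_num)
    refine le_trans ?_ this
    rw [show ((3:ℕ):ℝ) = (3:ℝ) by norm_num]
    have h9 : ((3:ℝ)^((2:ℝ)/3))^(3:ℕ) = 9 := by
      rw [← Real.rpow_natCast ((3:ℝ)^((2:ℝ)/3)) 3, ← Real.rpow_mul (by norm_num)]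
      norm_num
    have h10 : (2:ℝ)^(3:ℕ) ≤ ((3:ℝ)^((2:ℝ)/3))^(3:ℕ) := by rw [h9]; norm_num
    exact (pow_le_pow_iff_left₀ (by norm_num) (by positivity) (by norm_num)).1 h10
  set k : ℕ := ⌊x⌋₊ with hk
  have hxpos : (0 : ℝ) < x := by positivity
  have hk2 : 2 ≤ k := Nat.le_floor hx2
  have hkN : k ≤ N := by
    have h1 : (k : ℝ) ≤ x := Nat.floor_le hxpos.le
    have h2 : x ≤ (N : ℝ) := by
      calc x ≤ (N : ℝ) ^ (1 : ℝ) :=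
          Real.rpow_le_rpow_of_exponent_le (by exact_mod_cast hN1) (by norm_num)
        _ = (N : ℝ) := Real.rpow_one _
    exact_mod_cast Nat.cast_le.1 (by exact_mod_cast h1.trans h2 : (k:ℝ) ≤ (N:ℝ))
  -- step 1: card bound via primes
  have step1 : ((SFS N).card : ℝ) ≤ ∑ p ∈ PFS N, ((quadFS (N / p)).card : ℝ) := by
    have := SFS_card_le N
    calc ((SFS N).card : ℝ) ≤ ((∑ p ∈ PFS N, (quadFS (N / p)).card : ℕ) : ℝ) := by
          exact_mod_cast this
      _ = _ := by push_cast; rfl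
  -- step 2: per-prime bound
  have step2 : ∑ p ∈ PFS N, ((quadFS (N / p)).card : ℝ)
      ≤ ∑ p ∈ PFS N, 2 * (1 + Real.log N) * ((N : ℝ)^2 * ((p : ℝ)^2)⁻¹) := by
    apply Finset.sum_le_sum
    intro p hp
    simp only [PFS, Finset.mem_filter, Finset.mem_Icc] at hp
    obtain ⟨⟨hp1, hpN⟩, hpp, hplt⟩ := hp
    have hppos : (0 : ℝ) < p := by exact_mod_cast hp1
    have hcast : ((N / p : ℕ) : ℝ) ≤ (N : ℝ) / p := Nat.cast_div_le
    have hq1 : 1 ≤ N / p := (Nat.one_le_div_iff hp1).2 hpN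
    have hlogle : Real.log ((N / p : ℕ) : ℝ) ≤ Real.log N := by
      apply Real.log_le_log (by exact_mod_cast hq1)
      exact_mod_cast Nat.div_le_self N p
    calc ((quadFS (N / p)).card : ℝ) ≤ 2 * ((N / p : ℕ) : ℝ)^2 * (1 + Real.log ((N / p : ℕ) : ℝ)) :=
        quad_real (N / p)
      _ ≤ 2 * ((N : ℝ) / p)^2 * (1 + Real.log N) := by
          have h01 : (0:ℝ) ≤ 1 + Real.log ((N / p : ℕ) : ℝ) := by
            have : (0:ℝ) ≤ Real.log ((N / p : ℕ) : ℝ) := Real.log_natCast_nonneg _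
            linarith
          apply mul_le_mul
          · apply mul_le_mul_of_nonneg_left _ (by norm_num)
            apply pow_le_pow_left₀ (Nat.cast_nonneg _) hcast
          · linarith
          · exact h01
          · positivity
      _ = 2 * (1 + Real.log N) * ((N : ℝ)^2 * ((p : ℝ)^2)⁻¹) := by
          field_simp
  -- step 3: sum over primes
  have step3 : ∑ p ∈ PFS N, ((p : ℝ)^2)⁻¹ ≤ (k : ℝ)⁻¹ := by
    have hsub : PFS N ⊆ Ioc k N := by
      intro p hp
      simp only [PFS, Finset.mem_filter, Finset.mem_Icc] at hp
      obtain ⟨⟨hp1, hpN⟩, hpp, hplt⟩ := hp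
      simp only [Finset.mem_Ioc]
      refine ⟨?_, hpN⟩
      have : (k : ℝ) < (p : ℝ) := lt_of_le_of_lt (Nat.floor_le hxpos.le) hplt
      exact_mod_cast this
    calc ∑ p ∈ PFS N, ((p : ℝ)^2)⁻¹ ≤ ∑ i ∈ Ioc k N, ((i : ℝ)^2)⁻¹ :=
        Finset.sum_le_sum_of_subset_of_nonneg hsub (fun i _ _ => by positivity)
      _ ≤ (k : ℝ)⁻¹ - (N : ℝ)⁻¹ := sum_Ioc_inv_sq_le_sub (by omega) hkN
      _ ≤ (k : ℝ)⁻¹ := by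
          have : (0:ℝ) ≤ (N:ℝ)⁻¹ := by positivity
          linarith
  have hkinv : (k : ℝ)⁻¹ ≤ 2 * x⁻¹ := by
    have hklt : x - 1 < (k : ℝ) := by
      have := Nat.lt_floor_add_one x
      linarith
    have hxk : x / 2 ≤ (k : ℝ) := by linarith
    have hx20 : (0:ℝ) < x / 2 := by linarith
    calc (k : ℝ)⁻¹ ≤ (x / 2)⁻¹ := by
          exact inv_anti₀ hx20 hxk
      _ = 2 * x⁻¹ := by field_simp
  -- combine
  have hsum : ∑ p ∈ PFS N, 2 * (1 + Real.log N) * ((N : ℝ)^2 * ((p : ℝ)^2)⁻¹)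
      = 2 * (1 + Real.log N) * (N : ℝ)^2 * ∑ p ∈ PFS N, ((p : ℝ)^2)⁻¹ := by
    rw [Finset.mul_sum]
    exact Finset.sum_congr rfl (fun p _ => by ring)
  have hlog1 : (1 : ℝ) ≤ Real.log N := by
    rw [Real.le_log_iff_exp_le hN0]
    calc Real.exp 1 ≤ 2.7182818286 := (Real.exp_one_lt_d9).le
      _ ≤ (3 : ℝ) := by norm_num
      _ ≤ (N : ℝ) := by exact_mod_cast hN
  have hNx : (N : ℝ)^2 * x⁻¹ = (N : ℝ) ^ ((4:ℝ)/3) := by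
    rw [hx, ← Real.rpow_natCast (N:ℝ) 2, ← Real.rpow_neg hN0.le, ← Real.rpow_add hN0]
    norm_num
  have hlogpos : (0:ℝ) < Real.log N := lt_of_lt_of_le one_pos hlog1
  calc ((SFS N).card : ℝ) ≤ _ := step1
    _ ≤ _ := step2
    _ = 2 * (1 + Real.log N) * (N : ℝ)^2 * ∑ p ∈ PFS N, ((p : ℝ)^2)⁻¹ := hsum
    _ ≤ 2 * (1 + Real.log N) * (N : ℝ)^2 * (2 * x⁻¹) := by
        apply mul_le_mul_of_nonneg_left (step3.trans hkinv)
        positivity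
    _ = 4 * (1 + Real.log N) * ((N : ℝ)^2 * x⁻¹) := by ring
    _ = 4 * (1 + Real.log N) * (N : ℝ) ^ ((4:ℝ)/3) := by rw [hNx]
    _ ≤ 8 * (N : ℝ) ^ ((4 : ℝ) / 3) * Real.log N := by
        have hrp : (0:ℝ) ≤ (N : ℝ) ^ ((4:ℝ)/3) := by positivity
        nlinarith [mul_nonneg hrp hlogpos.le]
end

section
/- Let S_N = X₁ + ⋯ + X_N be a sum of random variables and suppose there exist nonnegative reals u₁, …, u_n such that for all 1 ≤ i < j ≤ n, P(|S_j − S_i| ≥ λ) ≤ λ^{-4}(∑_{i<k≤j} u_k)² for every λ > 0. Then P(max_{k≤n} |S_k| ≥ λ) ≪ λ^{-4}(∑_{k≤n} u_k)². -/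
open MeasureTheory Finset

private lemma rpow_neg_four' {x : ℝ} (hx : 0 < x) : x ^ (-(4:ℝ)) = (x ^ (4:ℕ))⁻¹ := by
  rw [Real.rpow_neg hx.le, show ((4:ℝ)) = ((4:ℕ):ℝ) by norm_num, Real.rpow_natCast]

private lemma meas_le_two' {Ω : Type} [MeasurableSpace Ω] (μ : Measure Ω)
    [IsProbabilityMeasure μ] {A B C : Set Ω} (h : A ⊆ B ∪ C) :
    (μ A).toReal ≤ (μ B).toReal + (μ C).toReal := by
  have h1 : μ A ≤ μ B + μ C := (measure_mono h).trans (measure_union_le _ _)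
  calc (μ A).toReal ≤ (μ B + μ C).toReal := ENNReal.toReal_mono (by finiteness) h1
    _ = (μ B).toReal + (μ C).toReal := ENNReal.toReal_add (by finiteness) (by finiteness)

private lemma meas_le_four' {Ω : Type} [MeasurableSpace Ω] (μ : Measure Ω)
    [IsProbabilityMeasure μ] {A B C D E : Set Ω} (h : A ⊆ B ∪ C ∪ D ∪ E) :
    (μ A).toReal ≤ (μ B).toReal + (μ C).toReal + (μ D).toReal + (μ E).toReal := by
  have h1 : μ A ≤ μ B + μ C + μ D + μ E := by
    calc μ A ≤ μ (B ∪ C ∪ D ∪ E) := measure_mono h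
      _ ≤ μ (B ∪ C ∪ D) + μ E := measure_union_le _ _
      _ ≤ (μ (B ∪ C) + μ D) + μ E := add_le_add_left (measure_union_le _ _) _
      _ ≤ ((μ B + μ C) + μ D) + μ E :=
          add_le_add_left (add_le_add_left (measure_union_le _ _) _) _
  calc (μ A).toReal ≤ (μ B + μ C + μ D + μ E).toReal := ENNReal.toReal_mono (by finiteness) h1
    _ = (μ B).toReal + (μ C).toReal + (μ D).toReal + (μ E).toReal := by
        rw [ENNReal.toReal_add (by finiteness) (by finiteness),
          ENNReal.toReal_add (by finiteness) (by finiteness),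
          ENNReal.toReal_add (by finiteness) (by finiteness)]

set_option maxHeartbeats 1000000 in
private lemma aux_billingsley {Ω : Type} [MeasurableSpace Ω] (μ : Measure Ω)
    [IsProbabilityMeasure μ] (n : ℕ) (X : ℕ → Ω → ℝ) (u : ℕ → ℝ) (hu : ∀ k, 0 ≤ u k)
    (H : ∀ i j : ℕ, i ≤ j → j ≤ n → ∀ lam : ℝ, 0 < lam →
      (μ {ω | lam ≤ |∑ k ∈ Finset.Ioc i j, X k ω|}).toReal
        ≤ lam ^ (-(4 : ℝ)) * (∑ k ∈ Finset.Ioc i j, u k) ^ 2) :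
    ∀ (d a b : ℕ), b - a ≤ d → a ≤ b → b ≤ n → ∀ lam : ℝ, 0 < lam →
      (μ {ω | ∃ j : ℕ, a ≤ j ∧ j ≤ b ∧ lam ≤ |∑ k ∈ Finset.Ioc a j, X k ω| ∧
          lam ≤ |∑ k ∈ Finset.Ioc j b, X k ω|}).toReal
        ≤ 100000 * lam ^ (-(4 : ℝ)) * (∑ k ∈ Finset.Ioc a b, u k) ^ 2 := by
  classical
  intro d
  induction d with
  | zero =>
      intro a b hd hab hbn lam hlam
      have hE : {ω | ∃ j : ℕ, a ≤ j ∧ j ≤ b ∧ lam ≤ |∑ k ∈ Finset.Ioc a j, X k ω| ∧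
          lam ≤ |∑ k ∈ Finset.Ioc j b, X k ω|} = ∅ := by
        ext ω
        simp only [Set.mem_setOf_eq, Set.mem_empty_iff_false, iff_false, not_exists]
        rintro j ⟨hja, hjb, h1, h2⟩
        have hja' : j = a := by omega
        subst hja'
        rw [Finset.Ioc_self, Finset.sum_empty, abs_zero] at h1
        linarith
      rw [hE]
      simp only [measure_empty, ENNReal.toReal_zero]
      have : (0:ℝ) ≤ lam ^ (-(4:ℝ)) := Real.rpow_nonneg hlam.le _
      positivity
  | succ d ih =>
      intro a b hd hab hbn lam hlam
      rcases le_or_gt b (a+1) with hb1 | hb1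
      · -- trivial case: interval of length ≤ 1
        have hE : {ω | ∃ j : ℕ, a ≤ j ∧ j ≤ b ∧ lam ≤ |∑ k ∈ Finset.Ioc a j, X k ω| ∧
            lam ≤ |∑ k ∈ Finset.Ioc j b, X k ω|} = ∅ := by
          ext ω
          simp only [Set.mem_setOf_eq, Set.mem_empty_iff_false, iff_false, not_exists]
          rintro j ⟨hja, hjb, h1, h2⟩
          rcases eq_or_lt_of_le hja with rfl | hja'
          · rw [Finset.Ioc_self, Finset.sum_empty, abs_zero] at h1
            linarith
          · have hjb' : j = b := by omega
            subst hjb'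
            rw [Finset.Ioc_self, Finset.sum_empty, abs_zero] at h2
            linarith
        rw [hE]
        simp only [measure_empty, ENNReal.toReal_zero]
        have : (0:ℝ) ≤ lam ^ (-(4:ℝ)) := Real.rpow_nonneg hlam.le _
        positivity
      · -- main case: a + 2 ≤ b
        have huab0 : 0 ≤ ∑ k ∈ Finset.Ioc a b, u k := Finset.sum_nonneg fun k _ => hu k
        have hex : ∃ m, a < m ∧ (∑ k ∈ Finset.Ioc a b, u k)/2 ≤ ∑ k ∈ Finset.Ioc a m, u k :=
          ⟨b, by omega, by linarith⟩
        set h := Nat.find hex with hh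
        obtain ⟨hah, hsum⟩ := Nat.find_spec hex
        have hhb : h ≤ b := Nat.find_le ⟨by omega, by linarith⟩
        have huL0 : 0 ≤ ∑ k ∈ Finset.Ioc a (h-1), u k := Finset.sum_nonneg fun k _ => hu k
        have huR0 : 0 ≤ ∑ k ∈ Finset.Ioc h b, u k := Finset.sum_nonneg fun k _ => hu k
        have hL : ∑ k ∈ Finset.Ioc a (h-1), u k ≤ (∑ k ∈ Finset.Ioc a b, u k)/2 := by
          rcases le_or_gt h (a+1) with h1 | h1
          · have he : h - 1 = a := by omega
            rw [he, Finset.Ioc_self, Finset.sum_empty]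
            linarith
          · have hm := Nat.find_min hex (show h - 1 < h by omega)
            by_contra hc
            push_neg at hc
            exact hm ⟨by omega, hc.le⟩
        have hR : ∑ k ∈ Finset.Ioc h b, u k ≤ (∑ k ∈ Finset.Ioc a b, u k)/2 := by
          have hsplit : (∑ k ∈ Finset.Ioc a h, u k) + ∑ k ∈ Finset.Ioc h b, u k
              = ∑ k ∈ Finset.Ioc a b, u k := Finset.sum_Ioc_consecutive _ hah.le hhb
          linarith
        have hlam9 : (0:ℝ) < 9/10 * lam := by linarith
        have hlam10 : (0:ℝ) < lam/10 := by linarith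
        -- the four covering sets
        have hincl : {ω | ∃ j : ℕ, a ≤ j ∧ j ≤ b ∧ lam ≤ |∑ k ∈ Finset.Ioc a j, X k ω| ∧
              lam ≤ |∑ k ∈ Finset.Ioc j b, X k ω|} ⊆
            {ω | ∃ j : ℕ, a ≤ j ∧ j ≤ h-1 ∧ 9/10 * lam ≤ |∑ k ∈ Finset.Ioc a j, X k ω| ∧
              9/10 * lam ≤ |∑ k ∈ Finset.Ioc j (h-1), X k ω|} ∪
            {ω | ∃ j : ℕ, h ≤ j ∧ j ≤ b ∧ 9/10 * lam ≤ |∑ k ∈ Finset.Ioc h j, X k ω| ∧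
              9/10 * lam ≤ |∑ k ∈ Finset.Ioc j b, X k ω|} ∪
            {ω | lam/10 ≤ |∑ k ∈ Finset.Ioc a (h-1), X k ω|} ∪
            {ω | lam/10 ≤ |∑ k ∈ Finset.Ioc h b, X k ω|} := by
          rintro ω ⟨j, hja, hjb, h1, h2⟩
          simp only [Set.mem_union, Set.mem_setOf_eq]
          rcases le_or_gt j (h-1) with hcase | hcase
          · rcases le_or_gt (9/10 * lam) |∑ k ∈ Finset.Ioc j (h-1), X k ω| with hc2 | hc2
            · exact Or.inl (Or.inl (Or.inl ⟨j, hja, hcase, le_trans (by linarith) h1, hc2⟩))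
            · refine Or.inl (Or.inr ?_)
              have hsplit : (∑ k ∈ Finset.Ioc a j, X k ω) + ∑ k ∈ Finset.Ioc j (h-1), X k ω
                  = ∑ k ∈ Finset.Ioc a (h-1), X k ω := Finset.sum_Ioc_consecutive _ hja hcase
              have habs : |∑ k ∈ Finset.Ioc a j, X k ω|
                  ≤ |∑ k ∈ Finset.Ioc a (h-1), X k ω| + |∑ k ∈ Finset.Ioc j (h-1), X k ω| := by
                have h3 := abs_add_le (∑ k ∈ Finset.Ioc a (h-1), X k ω)
                  (-(∑ k ∈ Finset.Ioc j (h-1), X k ω))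
                rw [abs_neg] at h3
                have e : (∑ k ∈ Finset.Ioc a (h-1), X k ω) +
                    -(∑ k ∈ Finset.Ioc j (h-1), X k ω) = ∑ k ∈ Finset.Ioc a j, X k ω := by
                  linarith
                rw [e] at h3
                exact h3
              linarith
          · have hhj : h ≤ j := by omega
            rcases le_or_gt (9/10 * lam) |∑ k ∈ Finset.Ioc h j, X k ω| with hc2 | hc2
            · exact Or.inl (Or.inl (Or.inr ⟨j, hhj, hjb, hc2, le_trans (by linarith) h2⟩))
            · refine Or.inr ?_
              have hsplit : (∑ k ∈ Finset.Ioc h j, X k ω) + ∑ k ∈ Finset.Ioc j b, X k ω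
                  = ∑ k ∈ Finset.Ioc h b, X k ω := Finset.sum_Ioc_consecutive _ hhj hjb
              have habs : |∑ k ∈ Finset.Ioc j b, X k ω|
                  ≤ |∑ k ∈ Finset.Ioc h b, X k ω| + |∑ k ∈ Finset.Ioc h j, X k ω| := by
                have h3 := abs_add_le (∑ k ∈ Finset.Ioc h b, X k ω)
                  (-(∑ k ∈ Finset.Ioc h j, X k ω))
                rw [abs_neg] at h3
                have e : (∑ k ∈ Finset.Ioc h b, X k ω) +
                    -(∑ k ∈ Finset.Ioc h j, X k ω) = ∑ k ∈ Finset.Ioc j b, X k ω := by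
                  linarith
                rw [e] at h3
                exact h3
              linarith
        have hE1 := ih a (h-1) (by omega) (by omega) (by omega) (9/10 * lam) hlam9
        have hE2 := ih h b (by omega) hhb hbn (9/10 * lam) hlam9
        have hT1 := H a (h-1) (by omega) (by omega) (lam/10) hlam10
        have hT2 := H h b hhb hbn (lam/10) hlam10
        have hsum4 := meas_le_four' μ hincl
        have hlam4 : (0:ℝ) < lam ^ (4:ℕ) := by positivity
        rw [rpow_neg_four' hlam9] at hE1 hE2
        rw [rpow_neg_four' hlam10] at hT1 hT2
        rw [rpow_neg_four' hlam]
        have e1 : ((9/10 * lam) ^ (4:ℕ))⁻¹ = 10000/6561 * (lam ^ (4:ℕ))⁻¹ := by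
          rw [mul_pow, mul_inv]
          norm_num
        have e2 : ((lam/10) ^ (4:ℕ))⁻¹ = 10000 * (lam ^ (4:ℕ))⁻¹ := by
          rw [div_pow, inv_div, div_eq_mul_inv]
          norm_num [mul_comm]
        rw [e1] at hE1 hE2
        rw [e2] at hT1 hT2
        set P := (lam ^ (4:ℕ))⁻¹ with hP
        have hP0 : 0 < P := by positivity
        set uab := ∑ k ∈ Finset.Ioc a b, u k
        set uL := ∑ k ∈ Finset.Ioc a (h-1), u k
        set uR := ∑ k ∈ Finset.Ioc h b, u k
        have huL2 : uL^2 ≤ uab^2/4 := by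
          nlinarith [mul_nonneg (sub_nonneg.2 hL) (show (0:ℝ) ≤ uab/2 + uL by linarith)]
        have huR2 : uR^2 ≤ uab^2/4 := by
          nlinarith [mul_nonneg (sub_nonneg.2 hR) (show (0:ℝ) ≤ uab/2 + uR by linarith)]
        have q1 : P * uL^2 ≤ P * (uab^2/4) := mul_le_mul_of_nonneg_left huL2 hP0.le
        have q2 : P * uR^2 ≤ P * (uab^2/4) := mul_le_mul_of_nonneg_left huR2 hP0.le
        calc (μ {ω | ∃ j : ℕ, a ≤ j ∧ j ≤ b ∧ lam ≤ |∑ k ∈ Finset.Ioc a j, X k ω| ∧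
              lam ≤ |∑ k ∈ Finset.Ioc j b, X k ω|}).toReal
            ≤ 100000 * (10000/6561 * P) * uL ^ 2 + 100000 * (10000/6561 * P) * uR ^ 2
              + 10000 * P * uL ^ 2 + 10000 * P * uR ^ 2 :=
              hsum4.trans (add_le_add (add_le_add (add_le_add hE1 hE2) hT1) hT2)
          _ ≤ 100000 * P * uab ^ 2 := by linarith [q1, q2, mul_nonneg hP0.le (sq_nonneg uab)]

/-- Billingsley's maximal inequality: if the partial sums `S_j = X_1 + ⋯ + X_j`
satisfy `P(|S_j − S_i| ≥ λ) ≤ λ⁻⁴ (∑_{i<k≤j} u_k)²` for all `i < j ≤ n`, then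
`P(max_{k≤n} |S_k| ≥ λ) ≪ λ⁻⁴ (∑_{k≤n} u_k)²`. -/
theorem stmt_13 :
    ∃ C : ℝ, 0 < C ∧
      ∀ (Ω : Type) (_ : MeasurableSpace Ω) (μ : Measure Ω), IsProbabilityMeasure μ →
      ∀ (n : ℕ) (X : ℕ → Ω → ℝ) (u : ℕ → ℝ),
      (∀ k, 0 ≤ u k) →
      (∀ i j : ℕ, i < j → j ≤ n → ∀ lam : ℝ, 0 < lam →
        (μ {ω | lam ≤ |∑ k ∈ Finset.Ioc i j, X k ω|}).toReal
          ≤ lam ^ (-(4 : ℝ)) * (∑ k ∈ Finset.Ioc i j, u k) ^ 2) →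
      ∀ lam : ℝ, 0 < lam →
        (μ {ω | ∃ k : ℕ, 1 ≤ k ∧ k ≤ n ∧ lam ≤ |∑ m ∈ Finset.Icc 1 k, X m ω|}).toReal
          ≤ C * lam ^ (-(4 : ℝ)) * (∑ k ∈ Finset.Icc 1 n, u k) ^ 2 := by
  refine ⟨1600016, by norm_num, ?_⟩
  intro Ω _ μ hμ n X u hu H lam hlam
  haveI := hμ
  have hIcc : ∀ k : ℕ, Finset.Icc 1 k = Finset.Ioc 0 k := by
    intro k; ext x; simp only [Finset.mem_Icc, Finset.mem_Ioc]; omega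
  have H' : ∀ i j : ℕ, i ≤ j → j ≤ n → ∀ l : ℝ, 0 < l →
      (μ {ω | l ≤ |∑ k ∈ Finset.Ioc i j, X k ω|}).toReal
        ≤ l ^ (-(4 : ℝ)) * (∑ k ∈ Finset.Ioc i j, u k) ^ 2 := by
    intro i j hij hjn l hl
    rcases eq_or_lt_of_le hij with rfl | hij'
    · have hE : {ω | l ≤ |∑ k ∈ Finset.Ioc i i, X k ω|} = ∅ := by
        ext ω
        simp only [Set.mem_setOf_eq, Finset.Ioc_self, Finset.sum_empty, abs_zero,
          Set.mem_empty_iff_false, iff_false, not_le]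
        exact hl
      rw [hE]
      simp only [measure_empty, ENNReal.toReal_zero]
      have : (0:ℝ) ≤ l ^ (-(4:ℝ)) := Real.rpow_nonneg hl.le _
      positivity
    · exact H i j hij' hjn l hl
  simp only [hIcc]
  have hincl : {ω | ∃ k : ℕ, 1 ≤ k ∧ k ≤ n ∧ lam ≤ |∑ m ∈ Finset.Ioc 0 k, X m ω|} ⊆
      {ω | ∃ j : ℕ, 0 ≤ j ∧ j ≤ n ∧ lam/2 ≤ |∑ k ∈ Finset.Ioc 0 j, X k ω| ∧
        lam/2 ≤ |∑ k ∈ Finset.Ioc j n, X k ω|} ∪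
      {ω | lam/2 ≤ |∑ k ∈ Finset.Ioc 0 n, X k ω|} := by
    rintro ω ⟨k, hk1, hkn, habs⟩
    simp only [Set.mem_union, Set.mem_setOf_eq]
    rcases le_or_gt (lam/2) |∑ m ∈ Finset.Ioc k n, X m ω| with hc | hc
    · exact Or.inl ⟨k, Nat.zero_le k, hkn, by linarith, hc⟩
    · refine Or.inr ?_
      have hsplit : (∑ m ∈ Finset.Ioc 0 k, X m ω) + ∑ m ∈ Finset.Ioc k n, X m ω
          = ∑ m ∈ Finset.Ioc 0 n, X m ω := Finset.sum_Ioc_consecutive _ (Nat.zero_le k) hkn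
      have habs2 : |∑ m ∈ Finset.Ioc 0 k, X m ω|
          ≤ |∑ m ∈ Finset.Ioc 0 n, X m ω| + |∑ m ∈ Finset.Ioc k n, X m ω| := by
        have h3 := abs_add_le (∑ m ∈ Finset.Ioc 0 n, X m ω) (-(∑ m ∈ Finset.Ioc k n, X m ω))
        rw [abs_neg] at h3
        have e : (∑ m ∈ Finset.Ioc 0 n, X m ω) + -(∑ m ∈ Finset.Ioc k n, X m ω)
            = ∑ m ∈ Finset.Ioc 0 k, X m ω := by linarith
        rw [e] at h3
        exact h3
      linarith
  have hlam2 : (0:ℝ) < lam/2 := by linarith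
  have hE0 := aux_billingsley μ n X u hu H' n 0 n (by omega) (Nat.zero_le n) le_rfl
    (lam/2) hlam2
  have hT0 := H' 0 n (Nat.zero_le n) le_rfl (lam/2) hlam2
  have hsum2 := meas_le_two' μ hincl
  rw [rpow_neg_four' hlam2] at hE0 hT0
  rw [rpow_neg_four' hlam]
  have e2 : ((lam/2) ^ (4:ℕ))⁻¹ = 16 * (lam ^ (4:ℕ))⁻¹ := by
    rw [div_pow, inv_div, div_eq_mul_inv]
    norm_num [mul_comm]
  rw [e2] at hE0 hT0
  set P := (lam ^ (4:ℕ))⁻¹ with hP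
  set U := ∑ k ∈ Finset.Ioc 0 n, u k
  calc (μ {ω | ∃ k : ℕ, 1 ≤ k ∧ k ≤ n ∧ lam ≤ |∑ m ∈ Finset.Ioc 0 k, X m ω|}).toReal
      ≤ 100000 * (16 * P) * U ^ 2 + 16 * P * U ^ 2 := hsum2.trans (add_le_add hE0 hT0)
    _ = 1600016 * P * U ^ 2 := by ring
end

section
/- Let c > 0 and A > 0 with 0 < c < 1/(c_P + 4A + 2) for a given constant c_P > 0, and set N_l = ⌊exp(l^c)⌋. Then the series ∑_{l≥1} ((N_{l+1} − N_l)/N_{l+1})² (log N_{l+1})^{c_P + 4A} converges. -/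
open Real Filter

set_option maxHeartbeats 1000000

/-- For `0 < c < 1/(c_P + 4A + 2)` and `N_l = ⌊exp(l^c)⌋`, the series
`∑_l ((N_{l+1} − N_l)/N_{l+1})² (log N_{l+1})^{c_P + 4A}` converges. -/
theorem stmt_16 (cP A c : ℝ) (hcP : 0 < cP) (hA : 0 < A) (hc : 0 < c)
    (hcu : c < 1 / (cP + 4 * A + 2)) :
    Summable (fun l : ℕ =>
      (((⌊Real.exp (((l + 1 : ℕ) : ℝ) ^ c)⌋₊ : ℝ) - (⌊Real.exp ((l : ℝ) ^ c)⌋₊ : ℝ))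
          / (⌊Real.exp (((l + 1 : ℕ) : ℝ) ^ c)⌋₊ : ℝ)) ^ 2
        * (Real.log (⌊Real.exp (((l + 1 : ℕ) : ℝ) ^ c)⌋₊ : ℝ)) ^ (cP + 4 * A)) := by
  set K := cP + 4 * A with hKdef
  have hK : 0 < K := by positivity
  have hK2 : (0:ℝ) < K + 2 := by linarith
  have hcK1 : c * (K + 2) < 1 := by
    rw [lt_div_iff₀ hK2] at hcu; linarith
  have hc1 : c < 1 := by nlinarith
  have he : 2 * c - 2 + c * K < -1 := by nlinarith
  -- eventual estimate : exp((x)^c) ≥ 2 x for large x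
  have t1 : Tendsto (fun x : ℝ => Real.exp (x ^ c) / x) atTop atTop := by
    have h := (tendsto_exp_div_rpow_atTop (1 / c)).comp (tendsto_rpow_atTop hc)
    apply h.congr'
    filter_upwards [eventually_gt_atTop (0:ℝ)] with x hx
    simp only [Function.comp]
    rw [← Real.rpow_mul hx.le, mul_one_div, div_self hc.ne', Real.rpow_one]
  have t2 : ∀ᶠ x : ℝ in atTop, 2 * x ≤ Real.exp (x ^ c) := by
    filter_upwards [t1.eventually_ge_atTop 2, eventually_gt_atTop (0:ℝ)] with x h2 hx
    rw [le_div_iff₀ hx] at h2; linarith [h2]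
  have t3 : Tendsto (fun l : ℕ => (l : ℝ) + 1) atTop atTop :=
    tendsto_atTop_add_const_right _ 1 tendsto_natCast_atTop_atTop
  have hev : ∀ᶠ l : ℕ in atTop,
      2 * ((l:ℝ) + 1) ≤ Real.exp (((l:ℝ) + 1) ^ c) := t3.eventually t2
  obtain ⟨L, hL⟩ := eventually_atTop.mp (hev.and (eventually_ge_atTop 1))
  rw [← summable_nat_add_iff L]
  set C : ℝ := 9 * 2 ^ (c * K) with hCdef
  have hsum : Summable (fun n : ℕ => C * ((n + L : ℕ) : ℝ) ^ (2 * c - 2 + c * K)) := by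
    exact (summable_nat_add_iff L).mpr ((Real.summable_nat_rpow.mpr he).mul_left C)
  refine Summable.of_nonneg_of_le (fun n => ?_) (fun n => ?_) hsum
  · -- nonnegativity
    have h1 : (1:ℝ) ≤ Real.exp ((((n + L) + 1 : ℕ) : ℝ) ^ c) :=
      Real.one_le_exp (Real.rpow_nonneg (Nat.cast_nonneg _) c)
    have hN1 : (1:ℝ) ≤ (⌊Real.exp ((((n + L) + 1 : ℕ) : ℝ) ^ c)⌋₊ : ℝ) := by
      exact_mod_cast Nat.one_le_cast.mpr (Nat.le_floor (by exact_mod_cast h1))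
    have := Real.log_nonneg hN1
    positivity
  · -- main bound
    obtain ⟨h2, hl1⟩ := hL (n + L) (Nat.le_add_left L n)
    set l := n + L with hl
    set x : ℝ := (l : ℝ) with hxdef
    have hx1 : (1:ℝ) ≤ x := hxdef ▸ Nat.one_le_cast.mpr hl1
    have hx0 : (0:ℝ) < x := lt_of_lt_of_le one_pos hx1
    have hcast : ((l + 1 : ℕ) : ℝ) = x + 1 := by push_cast; ring
    rw [hcast]
    set a1 : ℝ := Real.exp ((x + 1) ^ c) with ha1
    set a0 : ℝ := Real.exp (x ^ c) with ha0
    have ha10 : a0 ≤ a1 := Real.exp_le_exp.mpr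
      (Real.rpow_le_rpow hx0.le (by linarith) hc.le)
    have ha1big : 2 * (x + 1) ≤ a1 := h2
    have ha1pos : (0:ℝ) < a1 := Real.exp_pos _
    have ha0pos : (0:ℝ) < a0 := Real.exp_pos _
    set N1 : ℝ := (⌊a1⌋₊ : ℝ) with hN1def
    set N0 : ℝ := (⌊a0⌋₊ : ℝ) with hN0def
    have hN1lb : a1 - 1 ≤ N1 := (Nat.sub_one_lt_floor a1).le
    have hN1ub : N1 ≤ a1 := Nat.floor_le ha1pos.le
    have hN0lb : a0 - 1 ≤ N0 := (Nat.sub_one_lt_floor a0).le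
    have hN01 : N0 ≤ N1 := Nat.cast_le.mpr (Nat.floor_mono ha10)
    have hN1pos : (0:ℝ) < N1 := by linarith
    have hN1half : a1 / 2 ≤ N1 := by linarith
    have hN1x : x ≤ N1 := by linarith
    -- bound on d = (x+1)^c - x^c
    have hd : (x + 1) ^ c - x ^ c ≤ c * x ^ (c - 1) := by
      have h1x : (0:ℝ) < 1 / x := by positivity
      have key : (x + 1) ^ c ≤ x ^ c * (1 + c * (1 / x)) := by
        have hfac : x + 1 = x * (1 + 1 / x) := by field_simp
        rw [hfac, Real.mul_rpow hx0.le (by positivity)]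
        have hb : (1 + 1 / x) ^ c ≤ 1 + c * (1 / x) :=
          rpow_one_add_le_one_add_mul_self (by linarith) hc.le hc1.le
        exact mul_le_mul_of_nonneg_left hb (Real.rpow_nonneg hx0.le c)
      have hxc1 : x ^ (c - 1) = x ^ c / x := Real.rpow_sub_one hx0.ne' c
      rw [hxc1]
      have : x ^ c * (1 + c * (1 / x)) = x ^ c + c * (x ^ c / x) := by field_simp
      linarith [key, this ▸ key]
    -- ratio bound
    have hexp : 1 - a0 / a1 ≤ (x + 1) ^ c - x ^ c := by
      have : a0 / a1 = Real.exp (x ^ c - (x + 1) ^ c) := by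
        rw [Real.exp_sub]
      rw [this]
      linarith [Real.add_one_le_exp (x ^ c - (x + 1) ^ c)]
    have hratio : (N1 - N0) / N1 ≤ 3 * x ^ (c - 1) := by
      have step1 : (N1 - N0) / N1 ≤ (a1 - a0 + 1) / N1 := by
        gcongr
        linarith
      have step2 : (a1 - a0 + 1) / N1 ≤ (a1 - a0) / (a1 / 2) + 1 / x := by
        have hnum0 : (0:ℝ) ≤ a1 - a0 := by linarith
        have e1 : (a1 - a0) / N1 ≤ (a1 - a0) / (a1 / 2) :=
          div_le_div_of_nonneg_left hnum0 (by positivity) hN1half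
        have e2 : 1 / N1 ≤ 1 / x := one_div_le_one_div_of_le hx0 hN1x
        have : (a1 - a0 + 1) / N1 = (a1 - a0) / N1 + 1 / N1 := by ring
        linarith
      have step3 : (a1 - a0) / (a1 / 2) = 2 * (1 - a0 / a1) := by
        rw [div_div_eq_mul_div, mul_comm, mul_div_assoc, sub_div, div_self ha1pos.ne']
      have step4 : 1 / x ≤ x ^ (c - 1) := by
        rw [show (1:ℝ)/x = x ^ (-1:ℝ) by rw [Real.rpow_neg_one]; rw [inv_eq_one_div]]
        exact Real.rpow_le_rpow_of_exponent_le hx1 (by linarith)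
      have hd2 : 2 * (1 - a0 / a1) ≤ 2 * (c * x ^ (c - 1)) := by
        have := hexp.trans hd; linarith
      have hcb : 2 * (c * x ^ (c - 1)) + x ^ (c - 1) ≤ 3 * x ^ (c - 1) := by
        have hxp : (0:ℝ) ≤ x ^ (c - 1) := Real.rpow_nonneg hx0.le _
        nlinarith
      calc (N1 - N0) / N1 ≤ (a1 - a0 + 1) / N1 := step1
        _ ≤ (a1 - a0) / (a1 / 2) + 1 / x := step2
        _ = 2 * (1 - a0 / a1) + 1 / x := by rw [step3]
        _ ≤ 2 * (c * x ^ (c - 1)) + x ^ (c - 1) := by linarith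
        _ ≤ 3 * x ^ (c - 1) := hcb
    have hratio0 : 0 ≤ (N1 - N0) / N1 := div_nonneg (by linarith) hN1pos.le
    -- log bound
    have hN1one : (1:ℝ) ≤ N1 := by
      have : (1:ℝ) ≤ a1 := Real.one_le_exp (Real.rpow_nonneg (by linarith) c)
      exact_mod_cast Nat.one_le_cast.mpr (Nat.le_floor (by exact_mod_cast this))
    have hlog0 : 0 ≤ Real.log N1 := Real.log_nonneg hN1one
    have hlog : Real.log N1 ≤ (x + 1) ^ c := by
      calc Real.log N1 ≤ Real.log a1 := Real.log_le_log hN1pos hN1ub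
        _ = (x + 1) ^ c := Real.log_exp _
    have hlogpow : Real.log N1 ^ K ≤ (x + 1) ^ (c * K) := by
      rw [Real.rpow_mul (by linarith : (0:ℝ) ≤ x + 1)]
      exact Real.rpow_le_rpow hlog0 hlog hK.le
    have hxp1 : (x + 1) ^ (c * K) ≤ 2 ^ (c * K) * x ^ (c * K) := by
      rw [← Real.mul_rpow (by norm_num) hx0.le]
      exact Real.rpow_le_rpow (by linarith) (by linarith) (by positivity)
    have hsq : ((N1 - N0) / N1) ^ 2 ≤ 9 * x ^ (2 * c - 2) := by
      have h9 : ((N1 - N0) / N1) ^ 2 ≤ (3 * x ^ (c - 1)) ^ 2 := by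
        exact pow_le_pow_left₀ hratio0 hratio 2
      have : (3 * x ^ (c - 1)) ^ 2 = 9 * x ^ (2 * c - 2) := by
        rw [mul_pow, pow_two (x ^ (c - 1)), ← Real.rpow_add hx0,
          show c - 1 + (c - 1) = 2 * c - 2 from by ring]
        norm_num
      linarith [this ▸ h9]
    have hlogK0 : 0 ≤ Real.log N1 ^ K := Real.rpow_nonneg hlog0 K
    calc ((N1 - N0) / N1) ^ 2 * Real.log N1 ^ K
        ≤ (9 * x ^ (2 * c - 2)) * (2 ^ (c * K) * x ^ (c * K)) := by
          apply mul_le_mul hsq (hlogpow.trans hxp1) hlogK0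
          positivity
      _ = C * x ^ (2 * c - 2 + c * K) := by
          rw [Real.rpow_add hx0]; ring
end
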